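/- Let S̄ and T̄ be n-slices of the finite group G, and let W be a subgroup of N_G(T̄) = ⋂_{i=0}^n N_G(T_i). For w ∈ W let ⟨w⟩T̄ denote the n-slice (⟨w⟩T_0, …, ⟨w⟩T_n), where ⟨w⟩T_i is the subgroup of G generated by w and T_i. Then Σ_{w ∈ W} m(⟨w⟩T̄, S̄) ≡ 0 (mod |W|). -/

import Mathlib

variable {G : Type*}

/-- The mark `m(K̄,S̄) = |{gS₀ ∈ G/S₀ : g⁻¹Kᵢg ≤ Sᵢ for all i}|`. -/
noncomputable def mark [Group G] {n : ℕ} (K S : Fin (n + 1) → Subgroup G) : ℕ :=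
  Nat.card {x : G ⧸ S 0 //
    ∃ g : G, QuotientGroup.mk g = x ∧ ∀ i, ∀ k ∈ K i, g⁻¹ * k * g ∈ S i}

/-- The normalizer `N_G(S̄) = ⋂ᵢ N_G(Sᵢ)` of a slice. -/
def sliceNormalizer [Group G] {n : ℕ} (S : Fin (n + 1) → Subgroup G) : Subgroup G :=
  ⨅ i, Subgroup.normalizer (S i : Set G)

/-- for a subgroup `W ≤ N_G(T̄)`,
`Σ_{w ∈ W} m(⟨w⟩T̄, S̄) ≡ 0 (mod |W|)`, where `⟨w⟩T̄ = (⟨w⟩T₀, …, ⟨w⟩Tₙ)`. -/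
theorem sum_marks_congr {n : ℕ} [Group G] [Finite G]
    (S T : Fin (n + 1) → Subgroup G) (hS : Monotone S) (hT : Monotone T)
    (W : Subgroup G) (hW : W ≤ sliceNormalizer T) :
    (∑ᶠ w ∈ (W : Set G),
        mark (fun i : Fin (n + 1) => Subgroup.closure {w} ⊔ T i) S) ≡ 0
      [MOD Nat.card W] := by
  classical
  haveI : Fintype G := Fintype.ofFinite G
  -- the set of fixed points of the slice T̄
  let X := {x : G ⧸ S 0 // ∀ g : G, QuotientGroup.mk g = x →
      ∀ i, ∀ t ∈ T i, g⁻¹ * t * g ∈ S i}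
  -- W acts on X by left multiplication
  have smul_mem : ∀ (w : W) (x : X) (g : G),
      QuotientGroup.mk g = (w : G) • x.1 → ∀ i, ∀ t ∈ T i, g⁻¹ * t * g ∈ S i := by
    rintro w ⟨x, hx⟩ g hg i t ht
    have hwn : (w : G) ∈ Subgroup.normalizer (T i : Set G) := Subgroup.mem_iInf.mp (hW w.2) i
    have hwn' : (w : G)⁻¹ ∈ Subgroup.normalizer (T i : Set G) := inv_mem hwn
    have ht' : (w : G)⁻¹ * t * ((w : G)⁻¹)⁻¹ ∈ T i :=
      (Subgroup.mem_normalizer_iff.mp hwn' t).mp ht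
    have hg' : QuotientGroup.mk ((w : G)⁻¹ * g) = x := by
      have : QuotientGroup.mk ((w : G)⁻¹ * g) = (w : G)⁻¹ • (QuotientGroup.mk g : G ⧸ S 0) :=
        rfl
      rw [this, hg, smul_smul, inv_mul_cancel, one_smul]
    have := hx ((w : G)⁻¹ * g) hg' i _ ht'
    have hcalc : ((w : G)⁻¹ * g)⁻¹ * ((w : G)⁻¹ * t * ((w : G)⁻¹)⁻¹) * ((w : G)⁻¹ * g)
        = g⁻¹ * t * g := by group
    rwa [hcalc] at this
  letI : SMul W X := ⟨fun w x => ⟨(w : G) • x.1, smul_mem w x⟩⟩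
  have smul_def : ∀ (w : W) (x : X), (w • x).1 = (w : G) • x.1 := fun _ _ => rfl
  letI : MulAction W X :=
    { one_smul := fun x => Subtype.ext (by rw [smul_def]; simp)
      mul_smul := fun a b x => Subtype.ext (by
        simp only [smul_def]; rw [Subgroup.coe_mul, mul_smul]) }
  -- key: the mark of ⟨w⟩T̄ equals the number of fixed points of w on X
  have key : ∀ w : W,
      mark (fun i : Fin (n + 1) => Subgroup.closure {(w : G)} ⊔ T i) S
        = Nat.card (MulAction.fixedBy X w) := by
    intro w
    apply Nat.card_congr
    refine Equiv.ofBijective (fun p => ⟨⟨p.1, ?_⟩, ?_⟩) ⟨?_, ?_⟩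
    · -- membership in X
      obtain ⟨x, g, hgx, hg⟩ := p
      intro g' hg' i t ht
      have hs : g⁻¹ * g' ∈ S 0 := QuotientGroup.eq.mp (hgx.trans hg'.symm)
      have h1 : g⁻¹ * t * g ∈ S i := hg i t (Subgroup.mem_sup_right ht)
      have hs' : g⁻¹ * g' ∈ S i := hS (Fin.zero_le i) hs
      have hcalc : g'⁻¹ * t * g' = (g⁻¹ * g')⁻¹ * (g⁻¹ * t * g) * (g⁻¹ * g') := by group
      rw [hcalc]
      exact mul_mem (mul_mem (inv_mem hs') h1) hs'
    · -- fixed by w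
      obtain ⟨x, g, hgx, hg⟩ := p
      apply Subtype.ext
      rw [smul_def]
      show (w : G) • x = x
      have hw0 : g⁻¹ * (w : G) * g ∈ S 0 :=
        hg 0 (w : G) (Subgroup.mem_sup_left (Subgroup.mem_closure_singleton_self _))
      rw [← hgx]
      show QuotientGroup.mk ((w : G) * g) = QuotientGroup.mk g
      refine QuotientGroup.eq.mpr ?_
      have : ((w : G) * g)⁻¹ * g = (g⁻¹ * (w : G) * g)⁻¹ := by group
      rw [this]
      exact inv_mem hw0
    · -- injective
      rintro ⟨x, hx⟩ ⟨y, hy⟩ h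
      apply Subtype.ext
      simpa using congrArg (fun q => q.1.1) h
    · -- surjective
      rintro ⟨⟨x, hx⟩, hfix⟩
      set g := Quotient.out x with hgdef
      have hgx : QuotientGroup.mk g = x := Quotient.out_eq x
      have hw0 : g⁻¹ * (w : G) * g ∈ S 0 := by
        have h1 : QuotientGroup.mk ((w : G) * g) = x := by
          have := congrArg Subtype.val hfix
          rw [smul_def] at this
          calc QuotientGroup.mk ((w : G) * g) = (w : G) • (QuotientGroup.mk g : G ⧸ S 0) := rfl
          _ = x := by rw [hgx]; exact this
        have := QuotientGroup.eq.mp (h1.trans hgx.symm)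
        have hcalc : ((w : G) * g)⁻¹ * g = (g⁻¹ * (w : G) * g)⁻¹ := by group
        rw [hcalc] at this
        simpa using inv_mem this
      refine ⟨⟨x, g, hgx, ?_⟩, rfl⟩
      intro i
      have hle : Subgroup.closure {(w : G)} ⊔ T i ≤
          (S i).comap (MulAut.conj g⁻¹).toMonoidHom := by
        refine sup_le ?_ ?_
        · rw [Subgroup.closure_le]
          intro a ha
          simp only [Set.mem_singleton_iff] at ha
          subst ha
          show g⁻¹ * (w : G) * g⁻¹⁻¹ ∈ S i
          rw [inv_inv]
          exact hS (Fin.zero_le i) hw0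
        · intro t ht
          show g⁻¹ * t * g⁻¹⁻¹ ∈ S i
          rw [inv_inv]
          exact hx g hgx i t ht
      intro k hk
      have := hle hk
      simpa using this
  -- rewrite the finsum as a sum over W
  have hsum : (∑ᶠ w ∈ (W : Set G),
      mark (fun i : Fin (n + 1) => Subgroup.closure {w} ⊔ T i) S)
      = ∑ w : W, mark (fun i : Fin (n + 1) => Subgroup.closure {(w : G)} ⊔ T i) S := by
    rw [← finsum_set_coe_eq_finsum_mem, finsum_eq_sum_of_fintype]
    exact Fintype.sum_equiv (Equiv.subtypeEquivRight (fun x => Iff.rfl)) _ _ (fun w => rfl)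
  rw [hsum]
  have hfix : ∀ w : W, Nat.card (MulAction.fixedBy X w)
      = Fintype.card (MulAction.fixedBy X w) := fun w => Nat.card_eq_fintype_card
  calc (∑ w : W, mark (fun i : Fin (n + 1) => Subgroup.closure {(w : G)} ⊔ T i) S)
      = ∑ w : W, Fintype.card (MulAction.fixedBy X w) := by
        refine Finset.sum_congr rfl fun w _ => ?_
        rw [key w, hfix w]
    _ = Fintype.card (MulAction.orbitRel.Quotient W X) * Fintype.card W :=
        MulAction.sum_card_fixedBy_eq_card_orbits_mul_card_group W X
    _ ≡ 0 [MOD Nat.card W] := by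
        rw [Nat.card_eq_fintype_card]
        exact (Nat.modEq_zero_iff_dvd).mpr ⟨_, mul_comm _ _⟩
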